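/- Let T > 0, let (Ω, F, P) be a probability space carrying a standard Brownian motion W : [0,T] × Ω → ℝ with continuous sample paths, let ξ : Ω → ℝ be a random variable independent of W, and let f, g : ℝ → ℝ be Borel measurable functions. Assume P[g(ξ) ≠ 0] > 0 and that there exist constants C > 0, β > 1 and α with 0 ≤ α < β such that |g(x)| ≥ |x|^β / C and |f(x)| ≤ C·|x|^α for all x ∈ ℝ with |x| ≥ C. For each N ∈ ℕ (N ≥ 1) define Y^N_0 := ξ and Y^N_{k+1} := Y^N_k + (T/N)·f(Y^N_k) + g(Y^N_k)·(W_{(k+1)T/N} − W_{kT/N}) for k = 0, 1, …, N−1. Then lim_{N → ∞} E[|Y^N_N|^p] = ∞ for every p ∈ [1, ∞). -/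

import Mathlib

open MeasureTheory ProbabilityTheory Filter Real

lemma aux_div (γ c : ℝ) (hγ : 1 < γ) :
    Tendsto (fun N : ℕ => (1/γ) * γ ^ N - c * (N:ℝ) ^ 4) atTop atTop := by
  have hγ0 : 0 < γ := lt_trans one_pos hγ
  set c' : ℝ := max c 1 with hc'
  have hc0 : 0 < c' := lt_of_lt_of_le one_pos (le_max_right _ _)
  have h0 : Tendsto (fun n : ℕ => (n:ℝ) ^ 4 / γ ^ n) atTop (nhds 0) :=
    tendsto_pow_const_div_const_pow_of_one_lt 4 hγ
  have hhalf : Tendsto (fun N : ℕ => (1/(2*γ)) * γ ^ N) atTop atTop :=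
    (tendsto_pow_atTop_atTop_of_one_lt hγ).const_mul_atTop (by positivity)
  refine tendsto_atTop_mono' _ ?_ hhalf
  have hev : ∀ᶠ n : ℕ in atTop, (n:ℝ) ^ 4 / γ ^ n ≤ (1/(2*γ))/c' := by
    refine (h0.eventually (eventually_le_nhds ?_)).mono fun n hn => hn
    positivity
  filter_upwards [hev] with n hn
  have hpow : (0:ℝ) < γ ^ n := pow_pos hγ0 n
  have h1 : (n:ℝ) ^ 4 * c' ≤ (1/(2*γ)) * γ ^ n := by
    rw [div_le_div_iff₀ hpow hc0] at hn
    linarith [hn]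
  have h2 : c * (n:ℝ)^4 ≤ c' * (n:ℝ)^4 := by
    have : c ≤ c' := le_max_left _ _
    nlinarith [pow_nonneg (Nat.cast_nonneg n : (0:ℝ) ≤ n) 4]
  have : (1/γ) * γ ^ n = (1/(2*γ)) * γ ^ n + (1/(2*γ)) * γ ^ n := by ring
  nlinarith [h1, h2]


lemma pathwise {C T α β γ R b h : ℝ} {f g : ℝ → ℝ}
    (hC : 0 < C) (hγ1 : 1 ≤ γ)
    (hstep : ∀ r : ℝ, R ≤ r → r ^ γ + r + T * C * r ^ α ≤ r ^ β / C)
    (hRC : C ≤ R) (hR1 : 1 ≤ R) (hbR : R ≤ b)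
    (hggrow : ∀ x : ℝ, C ≤ |x| → |x| ^ β / C ≤ |g x|)
    (hfbound : ∀ x : ℝ, C ≤ |x| → |f x| ≤ C * |x| ^ α)
    (h0 : 0 ≤ h) (hhT : h ≤ T)
    (y : ℕ → ℝ) (D : ℕ → ℝ) (N : ℕ)
    (hrec : ∀ k, k < N → y (k+1) = y k + h * f (y k) + g (y k) * D k)
    (hD : ∀ k, k < N → 1 ≤ D k)
    (hb : b ≤ |y 1|) :
    ∀ j, j + 1 ≤ N → b ^ (γ ^ j) ≤ |y (j+1)| := by
  have hb1 : (1:ℝ) ≤ b := le_trans hR1 hbR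
  have hb0 : (0:ℝ) ≤ b := le_trans zero_le_one hb1
  intro j
  induction j with
  | zero => intro _; simpa [Real.rpow_one] using hb
  | succ j ih =>
    intro hjN
    have hj1 : j + 1 ≤ N := by omega
    have hr := ih hj1
    set r := |y (j+1)| with hrdef
    have hbr : b ≤ r := by
      calc b = b ^ (1:ℝ) := (Real.rpow_one b).symm
        _ ≤ b ^ (γ ^ j) := Real.rpow_le_rpow_of_exponent_le hb1 (one_le_pow₀ hγ1)
        _ ≤ r := hr
    have hRr : R ≤ r := le_trans hbR hbr
    have hCr : C ≤ r := le_trans hRC hRr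
    have h1r : (1:ℝ) ≤ r := le_trans hR1 hRr
    have h0r : (0:ℝ) < r := lt_of_lt_of_le one_pos h1r
    have hkN : j + 1 < N := by omega
    have hDk : 1 ≤ D (j+1) := hD _ hkN
    have hrec' := hrec (j+1) hkN
    -- lower bound on |y (j+2)|
    have hgD : r ^ β / C ≤ |g (y (j+1)) * D (j+1)| := by
      rw [abs_mul, abs_of_nonneg (le_trans zero_le_one hDk)]
      calc r ^ β / C = (r ^ β / C) * 1 := (mul_one _).symm
        _ ≤ |g (y (j+1))| * D (j+1) := by
            apply mul_le_mul (hggrow _ hCr) hDk zero_le_one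
            exact abs_nonneg _
    have hfb : |h * f (y (j+1))| ≤ T * (C * r ^ α) := by
      rw [abs_mul, abs_of_nonneg h0]
      apply mul_le_mul hhT (hfbound _ hCr) (abs_nonneg _) (le_trans h0 hhT)
    have htri : |g (y (j+1)) * D (j+1)| - r - |h * f (y (j+1))| ≤ |y (j+2)| := by
      have e : g (y (j+1)) * D (j+1) = y (j+2) - (y (j+1) + h * f (y (j+1))) := by
        rw [hrec']; ring
      have h1 : |g (y (j+1)) * D (j+1)| ≤ |y (j+2)| + (|y (j+1)| + |h * f (y (j+1))|) := by
        rw [e, sub_eq_add_neg]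
        refine (abs_add_le _ _).trans ?_
        rw [abs_neg]
        exact add_le_add le_rfl (abs_add_le _ _)
      linarith
    have hlow : r ^ β / C - r - T * (C * r ^ α) ≤ |y (j+2)| := by
      have := hfb
      linarith [htri, hgD]
    have hgam : r ^ γ ≤ |y (j+2)| := by
      have := hstep r hRr
      linarith
    calc b ^ (γ ^ (j+1)) = b ^ (γ ^ j * γ) := by rw [pow_succ]
      _ = (b ^ (γ ^ j)) ^ γ := Real.rpow_mul hb0 _ _
      _ ≤ r ^ γ := Real.rpow_le_rpow (Real.rpow_nonneg hb0 _) hr (le_trans zero_le_one hγ1)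
      _ ≤ |y (j+2)| := hgam


lemma gauss_lb {T : ℝ} (hT : 0 < T) (N : ℕ) (hN : 1 ≤ N) :
    ENNReal.ofReal ((Real.sqrt (2 * π * T))⁻¹
        * Real.exp (-(((N:ℝ) + 1) ^ 2 * N) / (2 * T)))
      ≤ gaussianReal 0 (Real.toNNReal (T / N)) (Set.Ici (N:ℝ)) := by
  have hN0 : (0:ℝ) < N := by exact_mod_cast hN
  have hTN : (0:ℝ) < T / N := by positivity
  set v : NNReal := Real.toNNReal (T / N) with hv
  have hvne : v ≠ 0 := by
    simp [hv, Real.toNNReal_eq_zero, not_le, hTN]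
  have hvc : (v : ℝ) = T / N := Real.coe_toNNReal _ hTN.le
  rw [gaussianReal_apply 0 hvne]
  have hsub : Set.Icc (N:ℝ) (N+1) ⊆ Set.Ici (N:ℝ) := fun x hx => hx.1
  refine le_trans ?_ (lintegral_mono_set hsub)
  -- lower bound the density on [N, N+1]
  set δ : ℝ := (Real.sqrt (2 * π * T))⁻¹ * Real.exp (-(((N:ℝ) + 1) ^ 2 * N) / (2 * T)) with hδ
  have hbound : ∀ x ∈ Set.Icc (N:ℝ) (N+1), δ ≤ gaussianPDFReal 0 v x := by
    intro x hx
    have hx0 : (0:ℝ) ≤ x := le_trans hN0.le hx.1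
    have hsq : x ^ 2 ≤ ((N:ℝ) + 1) ^ 2 := by nlinarith [hx.1, hx.2]
    rw [gaussianPDFReal]
    have h1 : (Real.sqrt (2 * π * T))⁻¹ ≤ (Real.sqrt (2 * π * (v:ℝ)))⁻¹ := by
      have hvT : (v:ℝ) ≤ T := by
        rw [hvc]
        exact div_le_self hT.le (by exact_mod_cast hN)
      have h2 : Real.sqrt (2 * π * (v:ℝ)) ≤ Real.sqrt (2 * π * T) := by
        apply Real.sqrt_le_sqrt
        have hπ := Real.pi_pos
        nlinarith
      have hpos : 0 < Real.sqrt (2 * π * (v:ℝ)) := by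
        apply Real.sqrt_pos.mpr
        have hπ := Real.pi_pos
        have : (0:ℝ) < (v:ℝ) := by rw [hvc]; exact hTN
        nlinarith
      exact inv_anti₀ hpos h2
    have h2 : Real.exp (-(((N:ℝ) + 1) ^ 2 * N) / (2 * T)) ≤ Real.exp (-(x - 0) ^ 2 / (2 * (v:ℝ))) := by
      apply Real.exp_le_exp.mpr
      rw [hvc, sub_zero]
      rw [div_le_div_iff₀ (by positivity) (by positivity)]
      have e : (((N:ℝ)+1)^2 * N) * (2*(T/N)) = ((N:ℝ)+1)^2 * (2*T) := by
        field_simp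
      nlinarith [mul_le_mul_of_nonneg_right hsq (by positivity : (0:ℝ) ≤ 2*T)]
    calc δ ≤ (Real.sqrt (2 * π * (v:ℝ)))⁻¹ * Real.exp (-(x - 0) ^ 2 / (2 * (v:ℝ))) := by
          rw [hδ]
          apply mul_le_mul h1 h2 (Real.exp_pos _).le (by positivity)
      _ = _ := rfl
  calc ENNReal.ofReal δ
      = ENNReal.ofReal δ * volume (Set.Icc (N:ℝ) (N+1)) := by
        rw [Real.volume_Icc]
        norm_num
    _ = ∫⁻ _ in Set.Icc (N:ℝ) (N+1), ENNReal.ofReal δ := (setLIntegral_const _ _).symm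
    _ ≤ ∫⁻ x in Set.Icc (N:ℝ) (N+1), gaussianPDF 0 v x := by
        apply setLIntegral_mono (measurable_gaussianPDFReal 0 v).ennreal_ofReal
        intro x hx
        exact ENNReal.ofReal_le_ofReal (hbound x hx)


lemma exp_lb {γ T a₀ : ℝ} (hγ : 1 < γ) (hT : 0 < T) (ha₀ : 0 < a₀)
    (N : ℕ) (hN : 1 ≤ N) :
    Real.exp ((1/γ) * γ ^ N - (2/T + |Real.log a₀|) * (N:ℝ) ^ 4)
      ≤ (3:ℝ) ^ (γ ^ (N - 1)) * (a₀ * Real.exp (-(((N:ℝ) + 1) ^ 2 * N) / (2 * T))) ^ N := by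
  have hγ0 : (0:ℝ) < γ := lt_trans one_pos hγ
  obtain ⟨M, rfl⟩ : ∃ M, N = M + 1 := ⟨N - 1, by omega⟩
  have hN1 : (1:ℝ) ≤ ((M+1:ℕ):ℝ) := by exact_mod_cast hN
  have h1 : (1/γ) * γ ^ (M + 1) = γ ^ M := by
    rw [pow_succ]; field_simp
  have hlog3 : (1:ℝ) ≤ Real.log 3 := by
    rw [Real.le_log_iff_exp_le (by norm_num)]
    calc Real.exp 1 ≤ 2.7182818286 := Real.exp_one_lt_d9.le
      _ ≤ 3 := by norm_num
  have hsimp : M + 1 - 1 = M := by omega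
  rw [hsimp]
  set n : ℝ := ((M+1:ℕ):ℝ) with hn
  set z : ℝ := -((n + 1) ^ 2 * n) / (2 * T) with hz
  have hrhs : (3:ℝ) ^ (γ ^ M) * (a₀ * Real.exp z) ^ (M+1)
      = Real.exp (Real.log 3 * γ ^ M + n * Real.log a₀ + n * z) := by
    rw [Real.rpow_def_of_pos (by norm_num : (0:ℝ) < 3)]
    rw [mul_pow, ← Real.exp_nat_mul]
    have ha : a₀ ^ (M+1) = Real.exp (n * Real.log a₀) := by
      rw [← Real.log_pow, Real.exp_log (pow_pos ha₀ _)]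
    rw [ha, ← Real.exp_add, ← Real.exp_add]
    congr 1
    rw [hn]
    ring
  rw [hrhs, Real.exp_le_exp, h1]
  set la : ℝ := Real.log a₀ with hla
  have hn0 : (0:ℝ) ≤ n := by linarith
  have hγM : (0:ℝ) ≤ γ ^ M := le_of_lt (pow_pos hγ0 M)
  have hn4 : n ≤ n ^ 4 := by
    calc n = n ^ 1 := (pow_one n).symm
      _ ≤ n ^ 4 := pow_le_pow_right₀ hN1 (by norm_num)
  have A : γ ^ M ≤ Real.log 3 * γ ^ M := le_mul_of_one_le_left hγM hlog3
  have B : -(n^4 * |la|) ≤ n * la := by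
    have b1 : n * (-|la|) ≤ n * la := mul_le_mul_of_nonneg_left (neg_abs_le la) hn0
    nlinarith [abs_nonneg la]
  have Cc : -((2/T) * n^4) ≤ n * z := by
    have h4 : (n+1)^2 * n * n ≤ 4 * n^4 := by nlinarith
    have e1 : n * z = -((n+1)^2 * n * n) / (2*T) := by rw [hz]; ring
    have e2 : -((2/T) * n^4) = -(4 * n^4) / (2*T) := by field_simp; ring
    rw [e1, e2]
    gcongr
  nlinarith [abs_nonneg la]

/-- `W` is a standard Brownian motion on the time interval `[0, T]` with
continuous sample paths: each `W t` is measurable, `W 0 = 0`, the sample paths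
are continuous on `[0, T]`, the increment `W t - W s` is centered Gaussian with
variance `t - s` for `0 ≤ s ≤ t ≤ T`, and increments over disjoint consecutive
time intervals are independent. -/
def IsStandardBrownianMotion {Ω : Type*} [MeasurableSpace Ω] (P : Measure Ω)
    (T : ℝ) (W : ℝ → Ω → ℝ) : Prop :=
  (∀ t, t ∈ Set.Icc 0 T → Measurable (W t)) ∧
  (∀ ω, W 0 ω = 0) ∧
  (∀ ω, ContinuousOn (fun t => W t ω) (Set.Icc 0 T)) ∧
  (∀ s t : ℝ, 0 ≤ s → s ≤ t → t ≤ T →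
    Measure.map (fun ω => W t ω - W s ω) P = gaussianReal 0 (Real.toNNReal (t - s))) ∧
  (∀ (n : ℕ) (t : Fin (n + 1) → ℝ), Monotone t → (∀ i, t i ∈ Set.Icc 0 T) →
    iIndepFun
      (fun (i : Fin n) => fun ω => W (t i.succ) ω - W (t i.castSucc) ω) P)

set_option maxHeartbeats 2000000 in
theorem stmt_14 {Ω : Type*} [MeasurableSpace Ω] (P : Measure Ω) [IsProbabilityMeasure P]
    (T : ℝ) (hT : 0 < T)
    (W : ℝ → Ω → ℝ) (hW : IsStandardBrownianMotion P T W)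
    (ξ : Ω → ℝ) (hξ : Measurable ξ)
    (hindep : IndepFun ξ (fun ω => (fun t => W t ω : ℝ → ℝ)) P)
    (f g : ℝ → ℝ) (hf : Measurable f) (hg : Measurable g)
    (hgξ : 0 < P {ω | g (ξ ω) ≠ 0})
    (C α β : ℝ) (hC : 0 < C) (hβ : 1 < β) (hα0 : 0 ≤ α) (hαβ : α < β)
    (hggrow : ∀ x : ℝ, C ≤ |x| → |x| ^ β / C ≤ |g x|)
    (hfbound : ∀ x : ℝ, C ≤ |x| → |f x| ≤ C * |x| ^ α)
    (Y : ℕ → ℕ → Ω → ℝ)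
    (hY0 : ∀ N, 1 ≤ N → ∀ ω, Y N 0 ω = ξ ω)
    (hYrec : ∀ N, 1 ≤ N → ∀ k < N, ∀ ω,
      Y N (k + 1) ω = Y N k ω + (T / N) * f (Y N k ω)
        + g (Y N k ω) * (W (((k : ℝ) + 1) * T / N) ω - W ((k : ℝ) * T / N) ω)) :
    ∀ p : ℝ, 1 ≤ p →
      Tendsto (fun N : ℕ => ∫⁻ ω, ENNReal.ofReal (|Y N N ω| ^ p) ∂P) atTop (nhds ⊤) := by
  intro p hp
  obtain ⟨hWmeas, hW0, hWcont, hWlaw, hWind⟩ := hW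
  -- Step A : find K with positive probability of the good event for ξ
  set S : ℕ → Set ℝ := fun n =>
    {x : ℝ | |x| ≤ (n:ℝ)+1 ∧ |f x| ≤ (n:ℝ)+1 ∧ 1/((n:ℝ)+1) ≤ |g x|} with hSdef
  have hSmeas : ∀ n, MeasurableSet (S n) := by
    intro n
    simp only [hSdef, Set.setOf_and]
    exact ((measurableSet_le (measurable_id.abs) measurable_const).inter
      ((measurableSet_le hf.abs measurable_const).inter
        (measurableSet_le measurable_const hg.abs)))
  have hsub : {ω | g (ξ ω) ≠ 0} ⊆ ⋃ n, ξ ⁻¹' (S n) := by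
    intro ω hω
    have hgpos : 0 < |g (ξ ω)| := abs_pos.mpr hω
    set x := ξ ω with hx
    refine Set.mem_iUnion.mpr ⟨⌈max (max |x| |f x|) (1/|g x|)⌉₊, ?_, ?_, ?_⟩
    · calc |x| ≤ max (max |x| |f x|) (1/|g x|) := le_max_of_le_left (le_max_left _ _)
        _ ≤ (⌈max (max |x| |f x|) (1/|g x|)⌉₊ : ℝ) := Nat.le_ceil _
        _ ≤ _ := by linarith
    · calc |f x| ≤ max (max |x| |f x|) (1/|g x|) := le_max_of_le_left (le_max_right _ _)
        _ ≤ (⌈max (max |x| |f x|) (1/|g x|)⌉₊ : ℝ) := Nat.le_ceil _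
        _ ≤ _ := by linarith
    · have h1 : 1/|g x| ≤ (⌈max (max |x| |f x|) (1/|g x|)⌉₊ : ℝ) + 1 := by
        calc 1/|g x| ≤ max (max |x| |f x|) (1/|g x|) := le_max_right _ _
          _ ≤ (⌈max (max |x| |f x|) (1/|g x|)⌉₊ : ℝ) := Nat.le_ceil _
          _ ≤ _ := by linarith
      exact (one_div_le hgpos (by positivity)).mp h1
  obtain ⟨K, hKne⟩ : ∃ n, P (ξ ⁻¹' (S n)) ≠ 0 := by
    by_contra hcon
    push_neg at hcon
    have h0 : P (⋃ n, ξ ⁻¹' (S n)) = 0 := measure_iUnion_null hcon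
    exact absurd ((measure_mono hsub).trans_eq h0) (not_le.mpr hgξ)
  have hε : 0 < P (ξ ⁻¹' (S K)) := pos_iff_ne_zero.mpr hKne
  set Kb : ℝ := (K:ℝ) + 1 with hKbdef
  have hKb : 0 < Kb := by positivity
  -- Step B : the intermediate exponent γ
  set γ : ℝ := (max α 1 + β)/2 with hγdef
  have hmax1 : 1 ≤ max α 1 := le_max_right _ _
  have hmaxβ : max α 1 < β := max_lt hαβ hβ
  have hγ1 : 1 < γ := by rw [hγdef]; linarith
  have hγα : α < γ := by have := le_max_left α 1; rw [hγdef]; linarith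
  have hγβ : γ < β := by rw [hγdef]; linarith
  have hγ0 : (0:ℝ) < γ := lt_trans one_pos hγ1
  -- Step C : threshold R for the growth step
  obtain ⟨R₀, hR₀⟩ := eventually_atTop.mp
    (((tendsto_rpow_atTop (by linarith : (0:ℝ) < β - γ)).eventually_ge_atTop (3*C)).and
      (((tendsto_rpow_atTop (by linarith : (0:ℝ) < γ - α)).eventually_ge_atTop (T*C)).and
        (eventually_ge_atTop (max (max C 3) 1))))
  set R : ℝ := max R₀ (max (max C 3) 1) with hRdef
  have hRC : C ≤ R := le_max_of_le_right (le_max_of_le_left (le_max_left _ _))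
  have hR3 : (3:ℝ) ≤ R := le_max_of_le_right (le_max_of_le_left (le_max_right _ _))
  have hR1 : (1:ℝ) ≤ R := le_max_of_le_right (le_max_right _ _)
  have hstep : ∀ r : ℝ, R ≤ r → r ^ γ + r + T*C*r^α ≤ r^β / C := by
    intro r hr
    obtain ⟨e1, e2, e3⟩ := hR₀ r (le_trans (le_max_left _ _) hr)
    have hr1 : (1:ℝ) ≤ r := le_trans hR1 hr
    have hr0 : (0:ℝ) < r := lt_of_lt_of_le one_pos hr1
    have hβsplit : r ^ β = r ^ γ * r ^ (β - γ) := by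
      rw [← Real.rpow_add hr0]; ring_nf
    have hγsplit : r ^ γ = r ^ α * r ^ (γ - α) := by
      rw [← Real.rpow_add hr0]; ring_nf
    have hγpos : (0:ℝ) < r ^ γ := Real.rpow_pos_of_pos hr0 _
    have hαpos : (0:ℝ) < r ^ α := Real.rpow_pos_of_pos hr0 _
    have hA : 3 * r ^ γ ≤ r ^ β / C := by
      rw [le_div_iff₀ hC, hβsplit]
      nlinarith
    have hB : r ≤ r ^ γ := by
      calc r = r ^ (1:ℝ) := (Real.rpow_one r).symm
        _ ≤ r ^ γ := Real.rpow_le_rpow_of_exponent_le hr1 (le_of_lt hγ1)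
    have hCc : T*C*r^α ≤ r ^ γ := by
      rw [hγsplit]
      nlinarith
    linarith
  -- Step D : the limit function
  set a₀ : ℝ := (Real.sqrt (2*π*T))⁻¹ with ha₀def
  have hsq : (0:ℝ) < Real.sqrt (2*π*T) := Real.sqrt_pos.mpr (by positivity)
  have ha₀ : 0 < a₀ := by rw [ha₀def]; positivity
  set c₉ : ℝ := 2/T + |Real.log a₀| with hc₉def
  set δ : ℕ → ℝ := fun N => a₀ * Real.exp (-(((N:ℝ)+1)^2 * N)/(2*T)) with hδdef
  have hδpos : ∀ N, 0 < δ N := fun N => by rw [hδdef]; positivity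
  set LB : ℕ → ENNReal := fun N =>
    P (ξ ⁻¹' (S K)) * ENNReal.ofReal (Real.exp ((1/γ)*γ^N - c₉*(N:ℝ)^4)) with hLBdef
  have hLBtop : Tendsto LB atTop (nhds ⊤) := by
    have h := aux_div γ c₉ hγ1
    have h2 : Tendsto (fun N : ℕ =>
        ENNReal.ofReal (Real.exp ((1/γ)*γ^N - c₉*(N:ℝ)^4))) atTop (nhds ⊤) :=
      ENNReal.tendsto_ofReal_atTop.comp (Real.tendsto_exp_atTop.comp h)
    have h3 := ENNReal.Tendsto.const_mul (a := P (ξ ⁻¹' (S K))) h2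
      (Or.inl (by simp))
    rwa [ENNReal.mul_top hε.ne'] at h3
  -- the main eventual bound
  have hmain : ∀ᶠ N : ℕ in atTop,
      LB N ≤ ∫⁻ ω, ENNReal.ofReal (|Y N N ω| ^ p) ∂P := by
    have hbt : Tendsto (fun N : ℕ => (N:ℝ)/Kb - Kb - T*Kb) atTop atTop := by
      have h1 : Tendsto (fun N : ℕ => (N:ℝ)/Kb + (-Kb - T*Kb)) atTop atTop :=
        tendsto_atTop_add_const_right _ _ (tendsto_natCast_atTop_atTop.atTop_div_const hKb)
      convert h1 using 2 with N
      ring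
    filter_upwards [hbt.eventually_ge_atTop (max R 3), eventually_ge_atTop 1] with N hbN hN1
    set b : ℝ := (N:ℝ)/Kb - Kb - T*Kb with hbdef
    have hbR : R ≤ b := le_trans (le_max_left _ _) hbN
    have hb3 : (3:ℝ) ≤ b := le_trans (le_max_right _ _) hbN
    have hNR : (1:ℝ) ≤ (N:ℝ) := by exact_mod_cast hN1
    have hN0 : (0:ℝ) < (N:ℝ) := by linarith
    set t : Fin (N+1) → ℝ := fun j => ((j:ℕ):ℝ)*T/(N:ℝ) with htdef
    have htmem : ∀ j : Fin (N+1), t j ∈ Set.Icc 0 T := by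
      intro j
      have hj : ((j:ℕ):ℝ) ≤ (N:ℝ) := by exact_mod_cast Nat.lt_succ_iff.mp j.isLt
      constructor
      · rw [htdef]; positivity
      · rw [htdef]
        rw [div_le_iff₀ hN0]
        nlinarith
    have hmono : Monotone t := by
      intro i j hij
      have hij' : ((i:ℕ):ℝ) ≤ ((j:ℕ):ℝ) := by exact_mod_cast hij
      show ((i:ℕ):ℝ)*T/(N:ℝ) ≤ ((j:ℕ):ℝ)*T/(N:ℝ)
      gcongr
    have ht1 : ∀ i : Fin N, t i.succ = (((i:ℕ):ℝ)+1)*T/(N:ℝ) := by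
      intro i
      rw [htdef]
      simp only [Fin.val_succ]
      push_cast
      ring
    have ht2 : ∀ i : Fin N, t i.castSucc = ((i:ℕ):ℝ)*T/(N:ℝ) := by
      intro i
      rw [htdef]
      simp only [Fin.coe_castSucc]
    set B : Fin N → Set Ω := fun i =>
      (fun ω => W (t i.succ) ω - W (t i.castSucc) ω) ⁻¹' Set.Ici (N:ℝ) with hBdef
    set A : Set Ω := ξ ⁻¹' (S K) ∩ ⋂ i, B i with hAdef
    have hXmeas : ∀ i : Fin N, Measurable (fun ω => W (t i.succ) ω - W (t i.castSucc) ω) :=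
      fun i => ((hWmeas _ (htmem i.succ)).sub (hWmeas _ (htmem i.castSucc)))
    have hBmeas : ∀ i, MeasurableSet (B i) := fun i => (hXmeas i) measurableSet_Ici
    have hAmeas : MeasurableSet A :=
      (hξ (hSmeas K)).inter (MeasurableSet.iInter fun i => hBmeas i)
    -- pathwise lower bound on the event A
    have hptw : ∀ ω, ω ∈ A → (3:ℝ) ^ (γ ^ (N-1)) ≤ |Y N N ω| ^ p := by
      intro ω hω
      obtain ⟨hω1, hω2⟩ := hω
      obtain ⟨hu1, hu2, hu3⟩ : |ξ ω| ≤ (K:ℝ)+1 ∧ |f (ξ ω)| ≤ (K:ℝ)+1 ∧ 1/((K:ℝ)+1) ≤ |g (ξ ω)| := hω1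
      set D : ℕ → ℝ := fun k => W (((k:ℝ)+1)*T/(N:ℝ)) ω - W ((k:ℝ)*T/(N:ℝ)) ω with hDdef
      have hDall : ∀ k, k < N → (N:ℝ) ≤ D k := by
        intro k hk
        have hmem := Set.mem_iInter.mp hω2 ⟨k, hk⟩
        rw [hBdef] at hmem
        simp only [Set.mem_preimage, Set.mem_Ici] at hmem
        rw [ht1 ⟨k, hk⟩, ht2 ⟨k, hk⟩] at hmem
        simpa [hDdef] using hmem
      have hTN0 : (0:ℝ) ≤ T/(N:ℝ) := by positivity
      have hTNT : T/(N:ℝ) ≤ T := div_le_self hT.le hNR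
      have hrec : ∀ k, k < N →
          Y N (k+1) ω = Y N k ω + (T/(N:ℝ)) * f (Y N k ω) + g (Y N k ω) * D k :=
        fun k hk => hYrec N hN1 k hk ω
      have hbase : b ≤ |Y N 1 ω| := by
        have h0N : 0 < N := hN1
        have e := hrec 0 h0N
        rw [hY0 N hN1 ω] at e
        have hD0 : (N:ℝ) ≤ D 0 := hDall 0 h0N
        have hgD : (1/Kb) * (N:ℝ) ≤ |g (ξ ω) * D 0| := by
          rw [abs_mul, abs_of_nonneg (le_trans (by linarith) hD0)]
          exact mul_le_mul hu3 hD0 (by linarith) (abs_nonneg _)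
        have hfD : |(T/(N:ℝ)) * f (ξ ω)| ≤ T * Kb := by
          rw [abs_mul, abs_of_nonneg hTN0]
          exact mul_le_mul hTNT hu2 (abs_nonneg _) hT.le
        have htri : |g (ξ ω) * D 0| ≤ |Y N 1 ω| + (|ξ ω| + |(T/(N:ℝ)) * f (ξ ω)|) := by
          have e2 : g (ξ ω) * D 0 = Y N 1 ω - (ξ ω + (T/(N:ℝ)) * f (ξ ω)) := by
            rw [e]; push_cast; ring
          rw [e2, sub_eq_add_neg]
          refine (abs_add_le _ _).trans ?_
          rw [abs_neg]
          exact add_le_add le_rfl (abs_add_le _ _)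
        have hdivmul : (1/Kb) * (N:ℝ) = (N:ℝ)/Kb := by ring
        rw [hbdef]
        rw [hdivmul] at hgD
        have hu1' : |ξ ω| ≤ Kb := by rw [hKbdef]; exact hu1
        linarith [hgD, hfD, htri, hu1']
      have hpath := pathwise hC (le_of_lt hγ1) hstep hRC hR1 hbR hggrow hfbound hTN0 hTNT
        (fun k => Y N k ω) D N hrec (fun k hk => le_trans hNR (hDall k hk)) hbase
      have hNsub : (N - 1) + 1 = N := by omega
      have hfin : b ^ (γ ^ (N-1)) ≤ |Y N N ω| := by
        have h := hpath (N-1) (by omega)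
        rw [hNsub] at h
        exact h
      have h3b : (3:ℝ) ^ (γ ^ (N-1)) ≤ b ^ (γ ^ (N-1)) :=
        Real.rpow_le_rpow (by norm_num) hb3 (pow_nonneg hγ0.le _)
      have h1Y : (3:ℝ) ^ (γ ^ (N-1)) ≤ |Y N N ω| := le_trans h3b hfin
      have h2Y : ((3:ℝ) ^ (γ ^ (N-1))) ^ p ≤ |Y N N ω| ^ p :=
        Real.rpow_le_rpow (Real.rpow_nonneg (by norm_num) _) h1Y (by linarith)
      have h3Y : (3:ℝ) ^ (γ ^ (N-1)) ≤ ((3:ℝ) ^ (γ ^ (N-1))) ^ p := by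
        rw [← Real.rpow_mul (by norm_num : (0:ℝ) ≤ 3)]
        exact Real.rpow_le_rpow_of_exponent_le (by norm_num)
          (le_mul_of_one_le_right (pow_nonneg hγ0.le _) hp)
      linarith
    -- Gaussian lower bound for each increment event
    have hPB : ∀ i : Fin N, ENNReal.ofReal (δ N) ≤ P (B i) := by
      intro i
      have h0s : 0 ≤ t i.castSucc := (htmem _).1
      have hst : t i.castSucc ≤ t i.succ := hmono (Fin.castSucc_le_succ i)
      have htT : t i.succ ≤ T := (htmem _).2
      have hlaw := hWlaw (t i.castSucc) (t i.succ) h0s hst htT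
      have hdiff : t i.succ - t i.castSucc = T/(N:ℝ) := by
        rw [ht1 i, ht2 i]; ring
      rw [hdiff] at hlaw
      have hmap : P (B i) = Measure.map (fun ω => W (t i.succ) ω - W (t i.castSucc) ω) P (Set.Ici (N:ℝ)) := by
        simp only [hBdef]
        rw [Measure.map_apply (hXmeas i) measurableSet_Ici]
      rw [hmap, hlaw]
      exact gauss_lb hT N hN1
    -- independence: split off the initial event
    set E : Set (ℝ → ℝ) :=
      ⋂ i : Fin N, (fun h : ℝ → ℝ => h (t i.succ) - h (t i.castSucc)) ⁻¹' Set.Ici (N:ℝ) with hEdef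
    have hEmeas : MeasurableSet E :=
      MeasurableSet.iInter fun i =>
        (((measurable_pi_apply (t i.succ)).sub
          (measurable_pi_apply (t i.castSucc)))) measurableSet_Ici
    have hpre : (fun ω => (fun s => W s ω : ℝ → ℝ)) ⁻¹' E = ⋂ i, B i := by
      rw [hEdef, Set.preimage_iInter]
      rfl
    have hsplit := hindep.measure_inter_preimage_eq_mul (S K) E (hSmeas K) hEmeas
    rw [hpre] at hsplit
    -- independence of the increments
    have hind := hWind N t hmono htmem
    have hprod := hind.measure_inter_preimage_eq_mul Finset.univ
      (sets := fun _ => Set.Ici (N:ℝ)) (fun i _ => measurableSet_Ici)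
    simp only [Finset.mem_univ, Set.iInter_true] at hprod
    have hprodB : P (⋂ i, B i) = ∏ i, P (B i) := by
      simp only [hBdef]
      exact hprod
    have hPA : P (ξ ⁻¹' (S K)) * (ENNReal.ofReal (δ N))^N ≤ P A := by
      rw [hAdef, hsplit, hprodB]
      apply mul_le_mul_right
      calc (ENNReal.ofReal (δ N))^N = ∏ _i : Fin N, ENNReal.ofReal (δ N) := by
            rw [Finset.prod_const, Finset.card_univ, Fintype.card_fin]
        _ ≤ ∏ i, P (B i) := Finset.prod_le_prod' fun i _ => hPB i
    have hint : ENNReal.ofReal ((3:ℝ) ^ (γ ^ (N-1))) * P A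
        ≤ ∫⁻ ω, ENNReal.ofReal (|Y N N ω|^p) ∂P := by
      rw [← lintegral_indicator_const hAmeas]
      refine lintegral_mono fun ω => ?_
      by_cases hω : ω ∈ A
      · rw [Set.indicator_of_mem hω]
        exact ENNReal.ofReal_le_ofReal (hptw ω hω)
      · rw [Set.indicator_of_notMem hω]
        exact zero_le
    calc LB N = P (ξ ⁻¹' (S K)) * ENNReal.ofReal (Real.exp ((1/γ)*γ^N - c₉*(N:ℝ)^4)) := rfl
      _ ≤ P (ξ ⁻¹' (S K)) * ENNReal.ofReal ((3:ℝ)^(γ^(N-1)) * (δ N)^N) := by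
          apply mul_le_mul_right
          exact ENNReal.ofReal_le_ofReal (exp_lb hγ1 hT ha₀ N hN1)
      _ = ENNReal.ofReal ((3:ℝ)^(γ^(N-1))) * (P (ξ ⁻¹' (S K)) * (ENNReal.ofReal (δ N))^N) := by
          rw [ENNReal.ofReal_mul (Real.rpow_nonneg (by norm_num) _),
            ENNReal.ofReal_pow (hδpos N).le]
          ring
      _ ≤ ENNReal.ofReal ((3:ℝ)^(γ^(N-1))) * P A := mul_le_mul_right hPA _
      _ ≤ _ := hint

  rw [ENNReal.tendsto_nhds_top_iff_nnreal]
  intro x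
  filter_upwards [hmain, ENNReal.tendsto_nhds_top_iff_nnreal.mp hLBtop x] with N h1 h2
  exact lt_of_lt_of_le h2 h1
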